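/- Let A be a unital C*-algebra and let ψ be a state on A admitting a characteristic sequence. Then ψ is a pure state. -/

import Mathlib

set_option maxHeartbeats 1000000

open Filter Topology
open scoped ComplexOrder

/-- A state on a unital C⋆-algebra: a positive linear functional of norm one. -/
def IsState {A : Type*} [CStarAlgebra A] (φ : A →L[ℂ] ℂ) : Prop :=
  ‖φ‖ = 1 ∧ ∀ a : A, 0 ≤ φ (star a * a)

/-- A characteristic sequence for a state `ψ`: a sequence of norm-one elements with
`ψ (Δ n) → 1` and `limsup ‖Δ n⋆ * a * Δ n‖ ≤ |ψ a|` for every `a`. -/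
def IsCharacteristicSequence {A : Type*} [CStarAlgebra A] (ψ : A →L[ℂ] ℂ) (Δ : ℕ → A) : Prop :=
  (∀ n, ‖Δ n‖ = 1) ∧ Tendsto (fun n => ψ (Δ n)) atTop (nhds 1) ∧
    ∀ a : A, limsup (fun n => ‖star (Δ n) * a * Δ n‖) atTop ≤ ‖ψ a‖

/-- A pure state: an extreme point of the state space. -/
def IsPureState {A : Type*} [CStarAlgebra A] (ψ : A →L[ℂ] ℂ) : Prop :=
  IsState ψ ∧ ∀ (φ₁ φ₂ : A →L[ℂ] ℂ) (t : ℝ), IsState φ₁ → IsState φ₂ →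
    0 < t → t < 1 → ψ = (t : ℂ) • φ₁ + ((1 - t : ℝ) : ℂ) • φ₂ → φ₁ = ψ ∧ φ₂ = ψ

section aux
variable {A : Type*} [CStarAlgebra A]

lemma pos_parts (φ : A →L[ℂ] ℂ) (hpos : ∀ a : A, 0 ≤ φ (star a * a)) (a : A) :
    0 ≤ (φ (star a * a)).re ∧ (φ (star a * a)).im = 0 := by
  have h := hpos a
  rw [Complex.le_def] at h
  exact ⟨by simpa using h.1, by simpa using h.2.symm⟩

lemma expand_sq (φ : A →L[ℂ] ℂ) (a b : A) (c d : ℂ) :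
    φ (star (c • a + d • b) * (c • a + d • b)) =
      (starRingEnd ℂ c * c) * φ (star a * a) + (starRingEnd ℂ c * d) * φ (star a * b)
      + (starRingEnd ℂ d * c) * φ (star b * a) + (starRingEnd ℂ d * d) * φ (star b * b) := by
  simp only [star_add, star_smul, add_mul, mul_add, smul_mul_assoc, mul_smul_comm,
    map_add, map_smul, RCLike.star_def, smul_smul, smul_eq_mul]
  ring

lemma herm (φ : A →L[ℂ] ℂ) (hpos : ∀ a : A, 0 ≤ φ (star a * a)) (a : A) :
    φ (star a) = starRingEnd ℂ (φ a) := by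
  have h1 := (pos_parts φ hpos ((1:ℂ) • a + (1:ℂ) • 1)).2
  have h2 := (pos_parts φ hpos ((1:ℂ) • a + Complex.I • 1)).2
  rw [expand_sq] at h1 h2
  have hS := (pos_parts φ hpos a).2
  have hO := (pos_parts φ hpos 1).2
  simp only [star_one, one_mul, mul_one, map_one] at h1 h2 hS hO
  simp only [Complex.add_im, Complex.mul_im, Complex.mul_re,
    Complex.conj_I, Complex.I_re, Complex.I_im, Complex.one_re, Complex.one_im,
    Complex.neg_re, Complex.neg_im] at h1 h2
  apply Complex.ext
  · rw [Complex.conj_re]; linarith [h1, h2, hS, hO]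
  · rw [Complex.conj_im]; linarith [h1, h2, hS, hO]

lemma cauchy_schwarz (φ : A →L[ℂ] ℂ) (hpos : ∀ a : A, 0 ≤ φ (star a * a)) (a b : A) :
    ‖φ (star a * b)‖ ^ 2 ≤ (φ (star a * a)).re * (φ (star b * b)).re := by
  set z := φ (star a * b) with hzdef
  obtain ⟨hA, hA'⟩ := pos_parts φ hpos a
  obtain ⟨hB, hB'⟩ := pos_parts φ hpos b
  by_cases h0 : z = 0
  · rw [h0]; simpa using mul_nonneg hA hB
  · have habs : (0:ℝ) < ‖z‖ := by
      simpa [norm_pos_iff] using h0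
    set w : ℂ := starRingEnd ℂ z / (‖z‖ : ℂ) with hwdef
    have hcz : ((‖z‖ : ℝ) : ℂ) ≠ 0 := by exact_mod_cast habs.ne'
    have hwz : w * z = (‖z‖ : ℂ) := by
      rw [hwdef, div_mul_eq_mul_div, mul_comm (starRingEnd ℂ z) z, Complex.mul_conj,
        ← Complex.sq_norm]
      push_cast
      rw [sq, mul_div_assoc, div_self hcz, mul_one]
    have hwz' : starRingEnd ℂ w * starRingEnd ℂ z = (‖z‖ : ℂ) := by
      have h := congrArg (starRingEnd ℂ) hwz
      simpa [map_mul, Complex.conj_ofReal] using h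
    have hww : starRingEnd ℂ w * w = 1 := by
      rw [hwdef, map_div₀, Complex.conj_conj, Complex.conj_ofReal, div_mul_div_comm,
        Complex.mul_conj, ← Complex.sq_norm]
      push_cast
      rw [sq]
      field_simp
    have hSa : φ (star a * a) = ((φ (star a * a)).re : ℂ) := by
      apply Complex.ext <;> simp [hA']
    have hSb : φ (star b * b) = ((φ (star b * b)).re : ℂ) := by
      apply Complex.ext <;> simp [hB']
    have hz' : φ (star b * a) = starRingEnd ℂ z := by
      have hs : star b * a = star (star a * b) := by simp [star_mul]
      rw [hs, herm φ hpos]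
    have key : ∀ t : ℝ, 0 ≤ (φ (star a * a)).re * (t * t)
        + 2 * ‖z‖ * t + (φ (star b * b)).re := by
      intro t
      have h := (pos_parts φ hpos ((t:ℂ) • a + w • b)).1
      rw [expand_sq] at h
      have hc : starRingEnd ℂ ((t:ℂ)) = (t:ℂ) := Complex.conj_ofReal t
      have heq : (starRingEnd ℂ (t:ℂ) * (t:ℂ)) * φ (star a * a)
          + (starRingEnd ℂ (t:ℂ) * w) * φ (star a * b)
          + (starRingEnd ℂ w * (t:ℂ)) * φ (star b * a)
          + (starRingEnd ℂ w * w) * φ (star b * b)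
          = (((φ (star a * a)).re * (t * t) + 2 * ‖z‖ * t
              + (φ (star b * b)).re : ℝ) : ℂ) := by
        conv_lhs => rw [hc, hz', hSa, hSb, ← hzdef]
        push_cast
        linear_combination (t:ℂ) * hwz + (t:ℂ) * hwz'
          + (((φ (star b * b)).re : ℝ) : ℂ) * hww
      rw [heq] at h
      simpa using h
    have hd := discrim_le_zero key
    rw [discrim] at hd
    nlinarith [hd]

lemma re_le_sq (φ : A →L[ℂ] ℂ) (hn : ‖φ‖ = 1) (a : A) :
    (φ (star a * a)).re ≤ ‖a‖ ^ 2 := by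
  calc (φ (star a * a)).re ≤ ‖φ (star a * a)‖ := Complex.re_le_norm _
    _ = ‖φ (star a * a)‖ := rfl
    _ ≤ ‖φ‖ * ‖star a * a‖ := φ.le_opNorm _
    _ = ‖a‖ ^ 2 := by rw [hn, one_mul, CStarRing.norm_star_mul_self]; ring

lemma tendsto_one_of_re (f : ℕ → ℂ) (hb : ∀ n, ‖f n‖ ≤ 1)
    (hre : Tendsto (fun n => (f n).re) atTop (nhds 1)) :
    Tendsto f atTop (nhds 1) := by
  rw [tendsto_iff_norm_sub_tendsto_zero]
  have hbd : ∀ n, ‖f n - 1‖ ≤ Real.sqrt (2 - 2 * (f n).re) := by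
    intro n
    have h1 : ‖f n - 1‖ = Real.sqrt (‖f n - 1‖ ^ 2) := by
      rw [Real.sqrt_sq (norm_nonneg _)]
    rw [h1]
    apply Real.sqrt_le_sqrt
    have h2 : ‖f n - 1‖ ^ 2 = Complex.normSq (f n - 1) := by
      rw [← Complex.sq_norm]
    have h3 : ‖f n‖ ^ 2 = Complex.normSq (f n) := Complex.sq_norm _
    have h4 := hb n
    have h5 : Complex.normSq (f n - 1) = Complex.normSq (f n) - 2 * (f n).re + 1 := by
      simp [Complex.normSq_apply, Complex.sub_re, Complex.sub_im]
      ring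
    nlinarith [norm_nonneg (f n)]
  have hlim : Tendsto (fun n => Real.sqrt (2 - 2 * (f n).re)) atTop (nhds 0) := by
    have h6 : Tendsto (fun n => 2 - 2 * (f n).re) atTop (nhds 0) := by
      have h7 := (tendsto_const_nhds (x := (2:ℝ)) (f := atTop (α := ℕ))).sub (hre.const_mul 2)
      simpa using h7
    have hc := (Real.continuous_sqrt.tendsto 0).comp h6
    simpa [Function.comp_def] using hc
  exact squeeze_zero (fun n => norm_nonneg _) hbd hlim

lemma key_lemma (ψ : A →L[ℂ] ℂ) (Δ : ℕ → A) (hΔ : IsCharacteristicSequence ψ Δ)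
    (φ : A →L[ℂ] ℂ) (hst : IsState φ) (h1 : φ 1 = 1)
    (hc : Tendsto (fun n => φ (Δ n)) atTop (nhds 1)) (a : A) :
    ‖φ a‖ ≤ ‖ψ a‖ := by
  obtain ⟨hΔn, hΔψ, hΔsup⟩ := hΔ
  obtain ⟨hφn, hφpos⟩ := hst
  set ε : ℕ → ℝ := fun n => (φ (star (1 - Δ n) * (1 - Δ n))).re with hεdef
  have hε0 : ∀ n, 0 ≤ ε n := fun n => (pos_parts φ hφpos _).1
  have hεle : ∀ n, ε n ≤ 2 - 2 * (φ (Δ n)).re := by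
    intro n
    have hexp : star (1 - Δ n) * (1 - Δ n)
        = 1 - Δ n - star (Δ n) + star (Δ n) * Δ n := by
      simp only [star_sub, star_one, sub_mul, mul_sub, one_mul, mul_one]
      abel
    have hφeq : φ (star (1 - Δ n) * (1 - Δ n))
        = φ 1 - φ (Δ n) - φ (star (Δ n)) + φ (star (Δ n) * Δ n) := by
      rw [hexp, map_add, map_sub, map_sub]
    have hh := herm φ hφpos (Δ n)
    have hre2 : (φ (star (Δ n) * Δ n)).re ≤ 1 := by
      have h := re_le_sq φ hφn (Δ n)
      rwa [hΔn n, one_pow] at h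
    have heps : ε n = 1 - 2 * (φ (Δ n)).re + (φ (star (Δ n) * Δ n)).re := by
      show (φ (star (1 - Δ n) * (1 - Δ n))).re = _
      rw [hφeq, hh, h1]
      simp only [Complex.add_re, Complex.sub_re, Complex.one_re, Complex.conj_re]
      ring
    linarith
  have hεlim : Tendsto ε atTop (nhds 0) := by
    have hre : Tendsto (fun n => (φ (Δ n)).re) atTop (nhds 1) := by
      have h := (Complex.continuous_re.tendsto 1).comp hc
      simpa [Function.comp_def] using h
    have hub : Tendsto (fun n => 2 - 2 * (φ (Δ n)).re) atTop (nhds 0) := by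
      have h := (tendsto_const_nhds (x := (2:ℝ)) (f := atTop (α := ℕ))).sub (hre.const_mul 2)
      simpa using h
    exact squeeze_zero hε0 hεle hub
  have hdiff : ∀ n, ‖φ (star (Δ n) * a * Δ n) - φ a‖ ≤ 2 * ‖a‖ * Real.sqrt (ε n) := by
    intro n
    have hsplit : a - star (Δ n) * a * Δ n
        = star (1 - Δ n) * a + star (star a * Δ n) * (1 - Δ n) := by
      simp only [star_sub, star_one, star_mul, star_star]
      noncomm_ring
    have ht1 : ‖φ (star (1 - Δ n) * a)‖ ≤ ‖a‖ * Real.sqrt (ε n) := by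
      have hcs := cauchy_schwarz φ hφpos (1 - Δ n) a
      have hre := re_le_sq φ hφn a
      have h0 : ‖φ (star (1 - Δ n) * a)‖ ^ 2 ≤ ε n * ‖a‖ ^ 2 := by
        calc ‖φ (star (1 - Δ n) * a)‖ ^ 2
            ≤ ε n * (φ (star a * a)).re := hcs
          _ ≤ ε n * ‖a‖ ^ 2 := mul_le_mul_of_nonneg_left hre (hε0 n)
      calc ‖φ (star (1 - Δ n) * a)‖
          = Real.sqrt (‖φ (star (1 - Δ n) * a)‖ ^ 2) := by
            rw [Real.sqrt_sq (norm_nonneg _)]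
        _ ≤ Real.sqrt (ε n * ‖a‖ ^ 2) := Real.sqrt_le_sqrt h0
        _ = ‖a‖ * Real.sqrt (ε n) := by
            rw [Real.sqrt_mul (hε0 n), Real.sqrt_sq (norm_nonneg a)]; ring
    have ht2 : ‖φ (star (star a * Δ n) * (1 - Δ n))‖ ≤ ‖a‖ * Real.sqrt (ε n) := by
      have hcs := cauchy_schwarz φ hφpos (star a * Δ n) (1 - Δ n)
      have hre : (φ (star (star a * Δ n) * (star a * Δ n))).re ≤ ‖a‖ ^ 2 := by
        have h := re_le_sq φ hφn (star a * Δ n)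
        have hle : ‖star a * Δ n‖ ≤ ‖a‖ := by
          calc ‖star a * Δ n‖ ≤ ‖star a‖ * ‖Δ n‖ := norm_mul_le _ _
            _ = ‖a‖ := by rw [norm_star, hΔn n, mul_one]
        have hsq : ‖star a * Δ n‖ ^ 2 ≤ ‖a‖ ^ 2 := pow_le_pow_left₀ (norm_nonneg _) hle 2
        linarith
      have h0 : ‖φ (star (star a * Δ n) * (1 - Δ n))‖ ^ 2 ≤ ‖a‖ ^ 2 * ε n := by
        calc ‖φ (star (star a * Δ n) * (1 - Δ n))‖ ^ 2
            ≤ (φ (star (star a * Δ n) * (star a * Δ n))).re * ε n := hcs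
          _ ≤ ‖a‖ ^ 2 * ε n := mul_le_mul_of_nonneg_right hre (hε0 n)
      calc ‖φ (star (star a * Δ n) * (1 - Δ n))‖
          = Real.sqrt (‖φ (star (star a * Δ n) * (1 - Δ n))‖ ^ 2) := by
            rw [Real.sqrt_sq (norm_nonneg _)]
        _ ≤ Real.sqrt (‖a‖ ^ 2 * ε n) := Real.sqrt_le_sqrt h0
        _ = ‖a‖ * Real.sqrt (ε n) := by
            rw [Real.sqrt_mul (sq_nonneg _), Real.sqrt_sq (norm_nonneg a)]
    have heq : φ a - φ (star (Δ n) * a * Δ n)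
        = φ (star (1 - Δ n) * a) + φ (star (star a * Δ n) * (1 - Δ n)) := by
      rw [← map_add, ← hsplit, map_sub]
    calc ‖φ (star (Δ n) * a * Δ n) - φ a‖
        = ‖φ a - φ (star (Δ n) * a * Δ n)‖ := by
          rw [norm_sub_rev]
      _ = ‖φ (star (1 - Δ n) * a) + φ (star (star a * Δ n) * (1 - Δ n))‖ := by
          rw [heq]
      _ ≤ ‖φ (star (1 - Δ n) * a)‖
          + ‖φ (star (star a * Δ n) * (1 - Δ n))‖ := norm_add_le _ _
      _ ≤ ‖a‖ * Real.sqrt (ε n) + ‖a‖ * Real.sqrt (ε n) := add_le_add ht1 ht2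
      _ = 2 * ‖a‖ * Real.sqrt (ε n) := by ring
  have hconv : Tendsto (fun n => φ (star (Δ n) * a * Δ n)) atTop (nhds (φ a)) := by
    rw [tendsto_iff_norm_sub_tendsto_zero]
    have hub : Tendsto (fun n => 2 * ‖a‖ * Real.sqrt (ε n)) atTop (nhds 0) := by
      have hs : Tendsto (fun n => Real.sqrt (ε n)) atTop (nhds 0) := by
        have h := (Real.continuous_sqrt.tendsto 0).comp hεlim
        simpa [Function.comp_def] using h
      have h := hs.const_mul (2 * ‖a‖)
      simpa using h
    exact squeeze_zero (fun n => norm_nonneg _) hdiff hub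
  have habs : Tendsto (fun n => ‖φ (star (Δ n) * a * Δ n)‖) atTop
      (nhds (‖φ a‖)) := (continuous_norm.tendsto _).comp hconv
  have hle : ∀ n, ‖φ (star (Δ n) * a * Δ n)‖ ≤ ‖star (Δ n) * a * Δ n‖ := by
    intro n
    calc ‖φ (star (Δ n) * a * Δ n)‖ = ‖φ (star (Δ n) * a * Δ n)‖ := rfl
      _ ≤ ‖φ‖ * ‖star (Δ n) * a * Δ n‖ := φ.le_opNorm _
      _ = ‖star (Δ n) * a * Δ n‖ := by rw [hφn, one_mul]
  have hbound : ∀ n, ‖star (Δ n) * a * Δ n‖ ≤ ‖a‖ := by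
    intro n
    calc ‖star (Δ n) * a * Δ n‖ ≤ ‖star (Δ n) * a‖ * ‖Δ n‖ := norm_mul_le _ _
      _ ≤ ‖star (Δ n)‖ * ‖a‖ * ‖Δ n‖ :=
          mul_le_mul_of_nonneg_right (norm_mul_le _ _) (norm_nonneg _)
      _ = ‖a‖ := by rw [norm_star, hΔn n, one_mul, mul_one]
  calc ‖φ a‖
      = limsup (fun n => ‖φ (star (Δ n) * a * Δ n)‖) atTop := habs.limsup_eq.symm
    _ ≤ limsup (fun n => ‖star (Δ n) * a * Δ n‖) atTop :=
        limsup_le_limsup (Eventually.of_forall hle) habs.isCoboundedUnder_le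
          (isBoundedUnder_of ⟨‖a‖, hbound⟩)
    _ ≤ ‖ψ a‖ := hΔsup a

end aux

/-- a state admitting a characteristic sequence is pure. -/
theorem stmt7 {A : Type*} [CStarAlgebra A]
    (ψ : A →L[ℂ] ℂ) (hψ : IsState ψ) (Δ : ℕ → A) (hΔ : IsCharacteristicSequence ψ Δ) :
    IsPureState ψ := by
  obtain ⟨hψn, hψpos⟩ := hψ
  obtain ⟨hΔn, hΔψ, hΔsup⟩ := hΔ
  haveI : Nontrivial A := by
    refine ⟨⟨Δ 0, 0, fun h => ?_⟩⟩
    have h0 := hΔn 0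
    rw [h, norm_zero] at h0
    exact one_ne_zero h0.symm
  have hψ1 : ψ 1 = 1 := by
    have hub : ‖ψ 1‖ ≤ 1 := by
      calc ‖ψ 1‖ = ‖ψ 1‖ := rfl
        _ ≤ ‖ψ‖ * ‖(1:A)‖ := ψ.le_opNorm _
        _ = 1 := by rw [hψn, norm_one, mul_one]
    have hlb : (1:ℝ) ≤ ‖ψ 1‖ := by
      have h := hΔsup 1
      have hconst : (fun n => ‖star (Δ n) * 1 * Δ n‖) = fun _ : ℕ => (1:ℝ) := by
        funext n
        rw [mul_one, CStarRing.norm_star_mul_self, hΔn n, mul_one]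
      rw [hconst, limsup_const] at h
      exact h
    have hpos1 := pos_parts ψ hψpos 1
    rw [star_one, one_mul] at hpos1
    have hreal : ψ 1 = (((ψ 1).re : ℝ) : ℂ) := by
      apply Complex.ext <;> simp [hpos1.2]
    have habs : ‖ψ 1‖ = (ψ 1).re := by
      nth_rewrite 1 [hreal]
      rw [Complex.norm_of_nonneg hpos1.1]
    rw [habs] at hub hlb
    apply Complex.ext
    · simp only [Complex.one_re]; linarith
    · simp [hpos1.2]
  refine ⟨⟨hψn, hψpos⟩, ?_⟩
  intro φ₁ φ₂ t hst1 hst2 ht0 ht1 heq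
  have heval : ∀ x : A, ψ x = (t:ℂ) * φ₁ x + ((1 - t : ℝ):ℂ) * φ₂ x := by
    intro x
    rw [heq]
    simp [ContinuousLinearMap.add_apply, ContinuousLinearMap.smul_apply, smul_eq_mul]
  have hone : ∀ φ' : A →L[ℂ] ℂ, IsState φ' →
      (φ' 1).im = 0 ∧ 0 ≤ (φ' 1).re ∧ (φ' 1).re ≤ 1 := by
    intro φ' hst'
    obtain ⟨hn', hp'⟩ := hst'
    have h := pos_parts φ' hp' 1
    rw [star_one, one_mul] at h
    refine ⟨h.2, h.1, ?_⟩
    calc (φ' 1).re ≤ ‖φ' 1‖ := Complex.re_le_norm _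
      _ = ‖φ' 1‖ := rfl
      _ ≤ ‖φ'‖ * ‖(1:A)‖ := φ'.le_opNorm _
      _ = 1 := by rw [hn', norm_one, mul_one]
  obtain ⟨him1, h01, h11⟩ := hone φ₁ hst1
  obtain ⟨him2, h02, h12⟩ := hone φ₂ hst2
  have hre1 : 1 = t * (φ₁ 1).re + (1 - t) * (φ₂ 1).re := by
    have h := congrArg Complex.re (heval 1)
    rw [hψ1] at h
    simpa [Complex.add_re, Complex.mul_re, Complex.ofReal_re, Complex.ofReal_im] using h
  have hb2 : (1 - t) * (φ₂ 1).re ≤ 1 - t := mul_le_of_le_one_right (by linarith) h12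
  have hb1 : t * (φ₁ 1).re ≤ t := mul_le_of_le_one_right (by linarith) h11
  have hr1 : (φ₁ 1).re = 1 := by
    have ht : t ≤ t * (φ₁ 1).re := by linarith
    have := (mul_le_mul_iff_of_pos_left ht0).mp (by linarith : t * 1 ≤ t * (φ₁ 1).re)
    linarith
  have hr2 : (φ₂ 1).re = 1 := by
    have ht : 1 - t ≤ (1 - t) * (φ₂ 1).re := by linarith
    have := (mul_le_mul_iff_of_pos_left (by linarith : (0:ℝ) < 1 - t)).mp
      (by linarith : (1 - t) * 1 ≤ (1 - t) * (φ₂ 1).re)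
    linarith
  have hφ₁1 : φ₁ 1 = 1 := by apply Complex.ext <;> simp [hr1, him1]
  have hφ₂1 : φ₂ 1 = 1 := by apply Complex.ext <;> simp [hr2, him2]
  have habs : ∀ (φ' : A →L[ℂ] ℂ), ‖φ'‖ = 1 → ∀ n, ‖φ' (Δ n)‖ ≤ 1 := by
    intro φ' hn' n
    calc ‖φ' (Δ n)‖ = ‖φ' (Δ n)‖ := rfl
      _ ≤ ‖φ'‖ * ‖Δ n‖ := φ'.le_opNorm _
      _ = 1 := by rw [hn', hΔn n, mul_one]
  have hreψ : Tendsto (fun n => (ψ (Δ n)).re) atTop (nhds 1) := by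
    have h := (Complex.continuous_re.tendsto 1).comp hΔψ
    simpa [Function.comp_def] using h
  have hsum : ∀ n, (ψ (Δ n)).re = t * (φ₁ (Δ n)).re + (1 - t) * (φ₂ (Δ n)).re := by
    intro n
    have h := congrArg Complex.re (heval (Δ n))
    simpa [Complex.add_re, Complex.mul_re, Complex.ofReal_re, Complex.ofReal_im] using h
  have htend : ∀ (φ' : A →L[ℂ] ℂ) (s : ℝ), 0 < s → ‖φ'‖ = 1 →
      (∀ n, (ψ (Δ n)).re - (1 - s) ≤ s * (φ' (Δ n)).re) →
      Tendsto (fun n => φ' (Δ n)) atTop (nhds 1) := by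
    intro φ' s hs hn' hlow
    apply tendsto_one_of_re _ (habs φ' hn')
    have hle1 : ∀ n, (φ' (Δ n)).re ≤ 1 := fun n =>
      le_trans (Complex.re_le_norm _) (habs φ' hn' n)
    have hlow' : ∀ n, ((ψ (Δ n)).re - (1 - s)) / s ≤ (φ' (Δ n)).re := by
      intro n
      rw [div_le_iff₀ hs, mul_comm]
      exact hlow n
    have hl : Tendsto (fun n => ((ψ (Δ n)).re - (1 - s)) / s) atTop (nhds 1) := by
      have h1 := (hreψ.sub (tendsto_const_nhds (x := (1 - s)))).div_const s
      have h2 : (1 - (1 - s)) / s = 1 := by field_simp; ring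
      rw [h2] at h1
      exact h1
    exact tendsto_of_tendsto_of_tendsto_of_le_of_le hl tendsto_const_nhds hlow' hle1
  have htend1 : Tendsto (fun n => φ₁ (Δ n)) atTop (nhds 1) := by
    apply htend φ₁ t ht0 hst1.1
    intro n
    have h2 := hsum n
    have hle2 : (φ₂ (Δ n)).re ≤ 1 := le_trans (Complex.re_le_norm _) (habs φ₂ hst2.1 n)
    have hp : (1 - t) * (φ₂ (Δ n)).re ≤ 1 - t :=
      mul_le_of_le_one_right (by linarith) hle2
    linarith
  have htend2 : Tendsto (fun n => φ₂ (Δ n)) atTop (nhds 1) := by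
    apply htend φ₂ (1 - t) (by linarith) hst2.1
    intro n
    have h2 := hsum n
    have hle1 : (φ₁ (Δ n)).re ≤ 1 := le_trans (Complex.re_le_norm _) (habs φ₁ hst1.1 n)
    have hp : t * (φ₁ (Δ n)).re ≤ t := mul_le_of_le_one_right ht0.le hle1
    linarith
  have main : ∀ φ' : A →L[ℂ] ℂ, IsState φ' → φ' 1 = 1 →
      Tendsto (fun n => φ' (Δ n)) atTop (nhds 1) → φ' = ψ := by
    intro φ' hst' h1' hc'
    ext a
    have hk := key_lemma ψ Δ ⟨hΔn, hΔψ, hΔsup⟩ φ' hst' h1' hc' (a - ψ a • 1)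
    have hψ0 : ψ (a - ψ a • 1) = 0 := by
      rw [map_sub, map_smul, hψ1, smul_eq_mul, mul_one, sub_self]
    rw [hψ0] at hk
    simp only [norm_zero] at hk
    have hz0 : ‖φ' (a - ψ a • 1)‖ = 0 :=
      le_antisymm hk (norm_nonneg _)
    rw [map_sub, map_smul, h1', smul_eq_mul, mul_one] at hz0
    exact sub_eq_zero.mp (norm_eq_zero.mp hz0)
  exact ⟨main φ₁ hst1 hφ₁1 htend1, main φ₂ hst2 hφ₂1 htend2⟩
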